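/- arXiv:1805.01953 — 2 statements merged into one kernel-verified Lean document; each statement's English description precedes it below -/
import Mathlib

section
/- Let G be a minimally bad graph and O = [v_1,…,v_n] a bad connected order of G with greedy colouring π = π_{G,O}. Let v be a vertex of degree 2 in G with neighbours b < a. Then exactly one of the following holds: (i) v = v_1 and v_2 = b; (ii) b < v < a. Moreover, π(v) ∈ {1,2}. -/
open Classical in
noncomputable def greedyStep {V : Type*} (G : SimpleGraph V) (f : V → ℕ) (v : V) : V → ℕ :=
  fun u => if u = v then sInf {c : ℕ | 1 ≤ c ∧ ∀ w, G.Adj v w → f w ≠ c} else f u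

noncomputable def greedyFrom {V : Type*} (G : SimpleGraph V) (f : V → ℕ) (l : List V) : V → ℕ :=
  l.foldl (greedyStep G) f

noncomputable def greedy {V : Type*} (G : SimpleGraph V) (l : List V) : V → ℕ :=
  greedyFrom G (fun _ => 0) l

open Classical in
noncomputable def greedyStart2 {V : Type*} (G : SimpleGraph V) : List V → V → ℕ
  | [] => fun _ => 0
  | v :: rest => greedyFrom G (fun u => if u = v then 2 else 0) rest

noncomputable def chi {V : Type*} [Fintype V] (G : SimpleGraph V) : ℕ :=
  sInf {n : ℕ | G.Colorable n}

open Classical in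
noncomputable def idx {V : Type*} (l : List V) (v : V) : ℕ := l.idxOf v

noncomputable def maxIdx {V : Type*} (l : List V) (A : Set V) : ℕ := sSup (idx l '' A)
noncomputable def minIdx {V : Type*} (l : List V) (A : Set V) : ℕ := sInf (idx l '' A)

def IsConnOrder {V : Type*} (G : SimpleGraph V) (l : List V) : Prop :=
  l.Nodup ∧ (∀ v : V, v ∈ l) ∧
    ∀ i : Fin l.length, 0 < i.1 → ∃ j : Fin l.length, j.1 < i.1 ∧ G.Adj (l.get j) (l.get i)

def GoodOrder {V : Type*} [Fintype V] (G : SimpleGraph V) (l : List V) : Prop :=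
  ∀ v : V, greedy G l v ≤ chi G

def Good {V : Type*} [Fintype V] (G : SimpleGraph V) : Prop :=
  ∀ s : Finset V, (G.induce (↑s : Set V)).Connected →
    ∀ l : List ↥(↑s : Set V), IsConnOrder (G.induce (↑s : Set V)) l →
      GoodOrder (G.induce (↑s : Set V)) l

def BadOrder {V : Type*} [Fintype V] (G : SimpleGraph V) (l : List V) : Prop :=
  IsConnOrder G l ∧ ¬ GoodOrder G l

def MinimallyBad {V : Type*} [Fintype V] (G : SimpleGraph V) : Prop :=
  ¬ Good G ∧ ∀ s : Finset V, s ≠ Finset.univ →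
    (G.induce (↑s : Set V)).Connected → Good (G.induce (↑s : Set V))

def IsInducedPath {V : Type*} (G : SimpleGraph V) (P : List V) : Prop :=
  P.Nodup ∧ ∀ i j : Fin P.length,
    G.Adj (P.get i) (P.get j) ↔ (i.1 + 1 = j.1 ∨ j.1 + 1 = i.1)

def IsFlatPath {V : Type*} (G : SimpleGraph V) (P : List V) : Prop :=
  IsInducedPath G P ∧
    ∀ i : Fin P.length, 0 < i.1 → i.1 + 1 < P.length → (G.neighborSet (P.get i)).ncard = 2

def WellOrderedPath {V : Type*} (l P : List V) : Prop :=
  P.Pairwise (fun u v => idx l u < idx l v) ∨ P.Pairwise (fun u v => idx l v < idx l u)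

def IsMaxFlatPath {V : Type*} (G : SimpleGraph V) (P : List V) : Prop :=
  IsFlatPath G P ∧ ∀ h : P ≠ [],
    (G.neighborSet (P.head h)).ncard ≠ 2 ∧ (G.neighborSet (P.getLast h)).ncard ≠ 2

def ClawFree {V : Type*} (G : SimpleGraph V) : Prop :=
  ∀ a b c d : V, G.Adj a b → G.Adj a c → G.Adj a d → b ≠ c → b ≠ d → c ≠ d →
    G.Adj b c ∨ G.Adj b d ∨ G.Adj c d

def IsHole {V : Type*} (G : SimpleGraph V) (C : List V) : Prop :=
  4 ≤ C.length ∧ C.Nodup ∧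
    ∀ i j : Fin C.length, G.Adj (C.get i) (C.get j) ↔
      ((i.1 + 1) % C.length = j.1 ∨ (j.1 + 1) % C.length = i.1)

def GemFree {V : Type*} (G : SimpleGraph V) : Prop :=
  ¬ ∃ a b c d e : V, G.Adj a b ∧ G.Adj b c ∧ G.Adj c d ∧
    ¬ G.Adj a c ∧ ¬ G.Adj a d ∧ ¬ G.Adj b d ∧
    G.Adj e a ∧ G.Adj e b ∧ G.Adj e c ∧ G.Adj e d

/-! ### Auxiliary lemmas -/

open Classical

section Basics
variable {V : Type*} {G : SimpleGraph V}

lemma greedyFrom_cons (f : V → ℕ) (x : V) (l : List V) :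
    greedyFrom G f (x :: l) = greedyFrom G (greedyStep G f x) l := rfl

lemma greedyFrom_append (f : V → ℕ) (l1 l2 : List V) :
    greedyFrom G f (l1 ++ l2) = greedyFrom G (greedyFrom G f l1) l2 :=
  List.foldl_append

lemma greedyStep_ne (f : V → ℕ) {u v : V} (h : u ≠ v) : greedyStep G f v u = f u := if_neg h

lemma greedyFrom_not_mem (f : V → ℕ) {u : V} :
    ∀ {l : List V}, u ∉ l → greedyFrom G f l u = f u := by
  intro l
  induction l generalizing f with
  | nil => intro _; rfl
  | cons x t ih =>
    intro hu
    have h1 : u ∉ t := fun h => hu (List.mem_cons_of_mem _ h)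
    have h2 : u ≠ x := fun h => hu (by simp [h])
    rw [greedyFrom_cons, ih _ h1, greedyStep_ne _ h2]

lemma greedy_colorSet_nonempty [Fintype V] (f : V → ℕ) (v : V) :
    {c : ℕ | 1 ≤ c ∧ ∀ w, G.Adj v w → f w ≠ c}.Nonempty := by
  classical
  refine ⟨(Finset.univ.sup f) + 1, by simp, fun w _ hc => ?_⟩
  have := Finset.le_sup (f := f) (Finset.mem_univ w)
  omega

lemma greedyStep_self [Fintype V] (f : V → ℕ) (v : V) :
    1 ≤ greedyStep G f v v ∧ ∀ w, G.Adj v w → f w ≠ greedyStep G f v v := by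
  have h := Nat.sInf_mem (greedy_colorSet_nonempty (G := G) f v)
  have hs : greedyStep G f v v = sInf {c : ℕ | 1 ≤ c ∧ ∀ w, G.Adj v w → f w ≠ c} := if_pos rfl
  rw [hs]
  exact h

lemma greedyStep_le [Fintype V] (f : V → ℕ) (v : V) {c : ℕ}
    (hc : 1 ≤ c) (hc2 : ∀ w, G.Adj v w → f w ≠ c) : greedyStep G f v v ≤ c := by
  have hs : greedyStep G f v v = sInf {c : ℕ | 1 ≤ c ∧ ∀ w, G.Adj v w → f w ≠ c} := if_pos rfl
  rw [hs]
  exact Nat.sInf_le ⟨hc, hc2⟩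

/-- The greedy colour of `v` is its colour at its own step. -/
lemma greedy_eq_step (z : V → ℕ) {l1 l2 : List V} {v : V} (hv : v ∉ l2) :
    greedyFrom G z (l1 ++ v :: l2) v = greedyStep G (greedyFrom G z l1) v v := by
  rw [greedyFrom_append, greedyFrom_cons, greedyFrom_not_mem _ hv]

/-- Earlier vertices keep their colour. -/
lemma greedy_eq_prefix (z : V → ℕ) {l1 l2 : List V} {v u : V} (hu : u ∉ v :: l2) :
    greedyFrom G z (l1 ++ v :: l2) u = greedyFrom G z l1 u := by
  rw [greedyFrom_append, greedyFrom_not_mem _ hu]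

end Basics

section Iso
variable {V W : Type*} {G : SimpleGraph V} {H : SimpleGraph W}

lemma greedyStep_iso (φ : G ≃g H) (f : V → ℕ) (x : V) :
    greedyStep H (f ∘ φ.symm) (φ x) = (greedyStep G f x) ∘ φ.symm := by
  funext u
  simp only [greedyStep, Function.comp_apply]
  have hiff : u = φ x ↔ φ.symm u = x := by
    constructor
    · intro h; simp [h]
    · intro h; rw [← h]; simp
  by_cases h : u = φ x
  · rw [if_pos h, if_pos (hiff.1 h)]
    congr 1
    ext c
    simp only [Set.mem_setOf_eq]
    constructor
    · rintro ⟨h1, h2⟩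
      refine ⟨h1, fun w hw hc => h2 (φ w) ?_ (by simpa using hc)⟩
      exact (φ.map_adj_iff).2 hw
    · rintro ⟨h1, h2⟩
      refine ⟨h1, fun w hw hc => ?_⟩
      have : G.Adj x (φ.symm w) := by
        have := φ.symm.map_adj_iff.2 hw
        simpa using this
      exact h2 (φ.symm w) this hc
  · rw [if_neg h, if_neg (fun hh => h (hiff.2 hh))]

lemma greedyFrom_iso (φ : G ≃g H) :
    ∀ (L : List V) (f : V → ℕ) (u : V),
      greedyFrom H (f ∘ φ.symm) (L.map φ) (φ u) = greedyFrom G f L u := by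
  intro L
  induction L with
  | nil => intro f u; simp [greedyFrom]
  | cons x t ih =>
    intro f u
    rw [List.map_cons, greedyFrom_cons, greedyFrom_cons, greedyStep_iso φ f x]
    exact ih _ u

lemma greedy_iso (φ : G ≃g H) (L : List V) (u : V) :
    greedy H (L.map φ) (φ u) = greedy G L u := by
  have : ((fun _ => 0) : V → ℕ) ∘ φ.symm = (fun _ => 0) := rfl
  rw [greedy, greedy, ← this, greedyFrom_iso φ L _ u]

lemma isConnOrder_iso (φ : G ≃g H) {L : List V} (h : IsConnOrder G L) :
    IsConnOrder H (L.map φ) := by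
  obtain ⟨hnd, hmem, hwit⟩ := h
  refine ⟨hnd.map (φ.toEquiv.injective), fun w => ?_, fun i hi => ?_⟩
  · exact List.mem_map.2 ⟨φ.symm w, hmem _, by simp⟩
  · have hlen : (L.map φ).length = L.length := List.length_map _
    have hi' : (i : ℕ) < L.length := by rw [← hlen]; exact i.2
    obtain ⟨j, hj, hadj⟩ := hwit ⟨i, hi'⟩ hi
    refine ⟨⟨j, by rw [hlen]; exact j.2⟩, hj, ?_⟩
    have h1 : (L.map φ).get ⟨j, by rw [hlen]; exact j.2⟩ = φ (L.get j) := by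
      simp [List.getElem_map]
    have h2 : (L.map φ).get i = φ (L.get ⟨i, hi'⟩) := by
      simp [List.getElem_map]
    rw [List.get_eq_getElem, List.get_eq_getElem] at h1 h2 ⊢
    rw [h1, h2]
    exact φ.map_adj_iff.2 hadj

lemma colorable_iso (φ : G ≃g H) (n : ℕ) : G.Colorable n ↔ H.Colorable n :=
  ⟨fun h => SimpleGraph.Colorable.of_hom φ.symm.toEmbedding.toHom h, fun h => SimpleGraph.Colorable.of_hom φ.toEmbedding.toHom h⟩

lemma chi_iso [Fintype V] [Fintype W] (φ : G ≃g H) : chi G = chi H := by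
  unfold chi
  congr 1
  ext n
  exact colorable_iso φ n

end Iso

section Induce
variable {V : Type*} {G : SimpleGraph V}

/-- Greedy on an induced subgraph agrees with greedy on the big graph when outside
vertices are uncoloured. -/
lemma greedyFrom_induce (A : Set V) :
    ∀ (L : List ↥A) (f' : ↥A → ℕ) (f : V → ℕ),
      (∀ u : ↥A, f u = f' u) → (∀ w, w ∉ A → f w = 0) →
      ∀ u : ↥A, greedyFrom (G.induce A) f' L u = greedyFrom G f (L.map Subtype.val) u.val := by
  intro L
  induction L with
  | nil =>
    intro f' f hf h0 u
    simp [greedyFrom, hf u]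
  | cons x t ih =>
    intro f' f hf h0 u
    rw [List.map_cons, greedyFrom_cons, greedyFrom_cons]
    refine ih _ _ ?_ ?_ u
    · intro w
      simp only [greedyStep]
      have hiff : w = x ↔ (w : V) = (x : V) := by
        constructor
        · intro h; rw [h]
        · intro h; exact Subtype.ext h
      by_cases h : w = x
      · rw [if_pos (hiff.1 h), if_pos h]
        congr 1
        ext c
        simp only [Set.mem_setOf_eq]
        constructor
        · rintro ⟨h1, h2⟩
          refine ⟨h1, fun y hy hc => ?_⟩
          have hadj : G.Adj (x : V) (y : V) := by
            simpa using hy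
          have := h2 (y : V) hadj
          rw [hf y] at this
          exact this hc
        · rintro ⟨h1, h2⟩
          refine ⟨h1, fun y hy hc => ?_⟩
          by_cases hyA : y ∈ A
          · have hadj : (G.induce A).Adj x ⟨y, hyA⟩ := by
              simpa using hy
            have := h2 ⟨y, hyA⟩ hadj
            rw [← hf ⟨y, hyA⟩] at this
            exact this hc
          · rw [h0 y hyA] at hc; omega
      · rw [if_neg (fun hh => h (hiff.2 hh)), if_neg h, hf w]
    · intro w hw
      have : w ≠ (x : V) := fun h => hw (h ▸ x.2)
      rw [greedyStep_ne _ this]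
      exact h0 w hw

/-- Changing colours only at a vertex not adjacent to anything in the list does not
affect greedy colours of other vertices. -/
lemma greedyFrom_congr_off (v : V) :
    ∀ (L : List V) (f g : V → ℕ), (∀ u, u ≠ v → f u = g u) → (∀ x ∈ L, ¬ G.Adj x v) →
      ∀ u, u ≠ v → greedyFrom G f L u = greedyFrom G g L u := by
  intro L
  induction L with
  | nil => intro f g hfg _ u hu; exact hfg u hu
  | cons x t ih =>
    intro f g hfg hnadj u hu
    rw [greedyFrom_cons, greedyFrom_cons]
    refine ih _ _ ?_ (fun y hy => hnadj y (List.mem_cons_of_mem _ hy)) u hu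
    intro w hw
    simp only [greedyStep]
    by_cases h : w = x
    · rw [if_pos h, if_pos h]
      congr 1
      ext c
      simp only [Set.mem_setOf_eq]
      have key : ∀ y, G.Adj x y → f y = g y := by
        intro y hy
        refine hfg y (fun hyv => ?_)
        exact hnadj x (List.mem_cons_self) (hyv ▸ hy)
      constructor
      · rintro ⟨h1, h2⟩; exact ⟨h1, fun y hy => (key y hy) ▸ h2 y hy⟩
      · rintro ⟨h1, h2⟩; exact ⟨h1, fun y hy => (key y hy) ▸ h2 y hy⟩
    · rw [if_neg h, if_neg h]; exact hfg w hw

end Induce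

section ConnOrder
variable {V : Type*} {G : SimpleGraph V}

lemma connected_of_connOrder {l : List V} (h : IsConnOrder G l) (hne : l ≠ []) :
    G.Connected := by
  obtain ⟨hnd, hmem, hwit⟩ := h
  have hlen : 0 < l.length := List.length_pos_iff.2 hne
  have key : ∀ n (i : Fin l.length), (i : ℕ) = n → G.Reachable (l.get ⟨0, hlen⟩) (l.get i) := by
    intro n
    induction n using Nat.strong_induction_on with
    | _ n ih =>
      intro i hi
      rcases Nat.eq_zero_or_pos n with h0 | h0
      · have hi0 : (i : ℕ) = 0 := by omega
        have : i = ⟨0, hlen⟩ := Fin.ext hi0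
        rw [this]
      · obtain ⟨j, hj, hadj⟩ := hwit i (by omega)
        have hr := ih j (by omega) j rfl
        exact hr.trans hadj.reachable
  have hpre : G.Preconnected := by
    intro u w
    have hu := hmem u
    have hw := hmem w
    have hu' : l.get ⟨List.idxOf u l, List.idxOf_lt_length_iff.2 hu⟩ = u :=
      List.idxOf_get _
    have hw' : l.get ⟨List.idxOf w l, List.idxOf_lt_length_iff.2 hw⟩ = w :=
      List.idxOf_get _
    have r1 := key _ ⟨List.idxOf u l, List.idxOf_lt_length_iff.2 hu⟩ rfl
    have r2 := key _ ⟨List.idxOf w l, List.idxOf_lt_length_iff.2 hw⟩ rfl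
    rw [hu'] at r1
    rw [hw'] at r2
    exact r1.symm.trans r2
  haveI : Nonempty V := ⟨l.get ⟨0, hlen⟩⟩
  exact ⟨hpre⟩

lemma greedy_pos [Fintype V] {l : List V} (hnd : l.Nodup) {u : V} (hu : u ∈ l) :
    1 ≤ greedy G l u := by
  obtain ⟨l1, l2, rfl⟩ := List.append_of_mem hu
  have hul2 : u ∉ l2 := by
    have := (List.Nodup.of_append_right hnd : (u :: l2).Nodup)
    exact (List.nodup_cons.1 this).1
  rw [greedy, greedy_eq_step _ hul2]
  exact (greedyStep_self _ _).1

lemma colorable_chi [Fintype V] (G : SimpleGraph V) : G.Colorable (chi G) := by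
  have hne : {n : ℕ | G.Colorable n}.Nonempty :=
    ⟨Fintype.card V, G.colorable_of_fintype⟩
  exact Nat.sInf_mem hne

lemma chi_le_of_colorable [Fintype V] {n : ℕ} (h : G.Colorable n) : chi G ≤ n :=
  Nat.sInf_le h

lemma two_le_chi_of_adj [Fintype V] {u w : V} (h : G.Adj u w) : 2 ≤ chi G := by
  by_contra hlt
  obtain ⟨C⟩ := colorable_chi G
  have h1 := C.valid h
  have h2 : (C u : ℕ) < chi G := (C u).2
  have h3 : (C w : ℕ) < chi G := (C w).2
  have : C u = C w := Fin.ext (by omega)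
  exact h1 this

end ConnOrder

section TwoColor
variable {V : Type*} {G : SimpleGraph V}

lemma fin2_eq_of_ne {a b c : Fin 2} (h1 : a ≠ c) (h2 : b ≠ c) : a = b := by
  have l1 : (a : ℕ) ≠ (c : ℕ) := fun h => h1 (Fin.ext h)
  have l2 : (b : ℕ) ≠ (c : ℕ) := fun h => h2 (Fin.ext h)
  have := a.2; have := b.2; have := c.2
  exact Fin.ext (by omega)

lemma greedy_le_two [Fintype V] {l : List V}
    (hc : G.Colorable 2) (hord : IsConnOrder G l) (u : V) : greedy G l u ≤ 2 := by
  obtain ⟨hnd, hmem, hwit⟩ := hord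
  obtain ⟨C⟩ := hc
  have hlen : 0 < l.length := List.length_pos_iff.2 (by
    intro h
    rw [h] at hmem
    exact (List.not_mem_nil) (hmem u))
  set v1 := l.get ⟨0, hlen⟩ with hv1
  set g : V → ℕ := fun w => if C w = C v1 then 1 else 2 with hg
  have hgval : ∀ w, g w = 1 ∨ g w = 2 := by
    intro w; by_cases h : C w = C v1 <;> simp [hg, h]
  have hgne : ∀ {y x : V}, G.Adj x y → g y ≠ g x := by
    intro y x hadj
    have hCne : C y ≠ C x := fun h => (C.valid hadj) h.symm
    by_cases hy : C y = C v1 <;> by_cases hx : C x = C v1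
    · exact absurd (hy.trans hx.symm) hCne
    · simp [hg, hy, hx]
    · simp [hg, hy, hx]
    · exact absurd (fin2_eq_of_ne hy hx) hCne
  have main : ∀ k, k ≤ l.length → ∀ w ∈ l.take k,
      greedyFrom G (fun _ => 0) (l.take k) w = g w := by
    intro k
    induction k with
    | zero => simp
    | succ k ih =>
      intro hk w hw
      have hk' : k < l.length := hk
      have htake : l.take (k+1) = l.take k ++ [l[k]] := by
        rw [← List.take_concat_get hk', List.concat_eq_append]
      set x := l[k] with hx
      have hxt : x ∉ l.take k := by
        intro hmemx
        have hnd' : (l.take (k+1)).Nodup := (List.take_sublist _ _).nodup hnd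
        rw [htake] at hnd'
        exact (List.disjoint_of_nodup_append hnd') hmemx (List.mem_singleton.2 rfl)
      set Fk := greedyFrom G (fun _ => 0) (l.take k) with hFk
      have hnbr : ∀ y, G.Adj x y → Fk y ≠ g x := by
        intro y hadj
        by_cases hy : y ∈ l.take k
        · rw [ih (le_of_lt hk') y hy]
          exact hgne hadj
        · rw [hFk, greedyFrom_not_mem _ hy]
          rcases hgval x with h | h <;> omega
      rw [htake] at hw
      rcases List.mem_append.1 hw with hw | hw
      · -- earlier vertex keeps colour
        have hwx : w ≠ x := fun h => hxt (h ▸ hw)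
        rw [htake]
        have : l.take k ++ [x] = l.take k ++ x :: [] := rfl
        rw [this, greedy_eq_prefix _ (by simp [hwx])]
        exact ih (le_of_lt hk') w hw
      · have hwx : w = x := List.mem_singleton.1 hw
        subst hwx
        rw [htake]
        have heq : l.take k ++ [x] = l.take k ++ x :: [] := rfl
        rw [heq, greedy_eq_step _ (List.not_mem_nil)]
        have hub : greedyStep G Fk x x ≤ g x := by
          refine greedyStep_le _ _ ?_ hnbr
          rcases hgval x with h | h <;> omega
        have hlb := greedyStep_self (G := G) Fk x
        rcases hgval x with h | h
        · rw [h]; exact Nat.le_antisymm (h ▸ hub) hlb.1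
        · -- g x = 2 : x is not the first vertex, so some earlier neighbour has colour 1
          have hwv1 : C x ≠ C v1 := by
            intro hcw
            simp [hg, hcw] at h
          have hk0 : 0 < k := by
            rcases Nat.eq_zero_or_pos k with h0 | h0
            · exfalso
              apply hwv1
              have hxv : x = v1 := by
                rw [hx, hv1]
                subst h0
                simp
              rw [hxv]
            · exact h0
          obtain ⟨j, hj, hadj⟩ := hwit ⟨k, hk'⟩ hk0
          have hjk : (j : ℕ) < k := hj
          set y0 := l.get j with hy0
          have hy0mem : y0 ∈ l.take k := by
            have hjlt : (j : ℕ) < (l.take k).length := by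
              rw [List.length_take]
              omega
            have hte : (l.take k)[(j : ℕ)] = l[(j : ℕ)] := List.getElem_take
            rw [hy0, List.get_eq_getElem, ← hte]
            exact List.getElem_mem _
          have hadj' : G.Adj x y0 := by
            have hgx : l.get ⟨k, hk'⟩ = x := by
              rw [List.get_eq_getElem, ← hx]
            rw [hgx] at hadj
            exact hadj.symm
          have hco : Fk y0 = g y0 := ih (le_of_lt hk') y0 hy0mem
          have hgy0 : g y0 = 1 := by
            have hCy0 : C y0 = C v1 :=
              fin2_eq_of_ne (c := C x) (fun hh => (C.valid hadj') hh.symm)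
                (fun hh => hwv1 hh.symm) 
            simp [hg, hCy0]
          have h1ne := hlb.2 y0 hadj'
          rw [hco, hgy0] at h1ne
          have hub2 : greedyStep G Fk x x ≤ 2 := h ▸ hub
          rw [h]
          show greedyStep G Fk x x = 2
          have h1le := hlb.1
          omega
  have hul : u ∈ l := hmem u
  have : greedy G l u = g u := by
    have := main l.length (le_refl _) u (by rw [List.take_length]; exact hul)
    rw [List.take_length] at this
    exact this
  rw [this]
  rcases hgval u with h | h <;> omega

end TwoColor

section GoodTransfer

lemma goodOrder_of_good {W : Type*} [Fintype W] {H : SimpleGraph W} (hg : Good H)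
    {L : List W} (hconn : H.Connected) (hord : IsConnOrder H L) :
    ∀ u, greedy H L u ≤ chi H := by
  classical
  have hU : ((Finset.univ : Finset W) : Set W) = Set.univ := Finset.coe_univ
  have hφ : Nonempty ((H.induce ((Finset.univ : Finset W) : Set W)) ≃g H) := by
    rw [hU]
    exact ⟨SimpleGraph.induceUnivIso H⟩
  obtain ⟨φ⟩ := hφ
  intro u
  have hconn' : (H.induce ((Finset.univ : Finset W) : Set W)).Connected :=
    (SimpleGraph.Iso.connected_iff φ).2 hconn
  have hord' : IsConnOrder (H.induce ((Finset.univ : Finset W) : Set W)) (L.map φ.symm) :=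
    isConnOrder_iso φ.symm hord
  have hgo := hg Finset.univ hconn' (L.map φ.symm) hord'
  have h1 := hgo (φ.symm u)
  have h2 : greedy H L u = greedy (H.induce ((Finset.univ : Finset W) : Set W))
      (L.map φ.symm) (φ.symm u) := by
    have h3 := greedy_iso φ (L.map φ.symm) (φ.symm u)
    rw [List.map_map] at h3
    have h4 : (⇑φ ∘ ⇑φ.symm) = id := funext (fun x => φ.apply_symm_apply x)
    rw [h4, List.map_id, φ.apply_symm_apply] at h3
    exact h3
  have h5 : chi (H.induce ((Finset.univ : Finset W) : Set W)) = chi H := chi_iso φ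
  rw [h2, ← h5]
  exact h1

lemma chi_induce_le {V : Type*} [Fintype V] (G : SimpleGraph V) (A : Set V) [Fintype ↥A] :
    chi (G.induce A) ≤ chi G := by
  have h := colorable_chi G
  exact chi_le_of_colorable (SimpleGraph.Colorable.of_hom (SimpleGraph.Embedding.induce A).toHom h)

end GoodTransfer

section Erase
variable {V : Type*} {G : SimpleGraph V}

lemma getElem_idx_congr {α : Type*} (l : List α) {i j : ℕ} (h : i = j) (hi : i < l.length) :
    l[i] = l[j]'(h ▸ hi) := by subst h; rfl

lemma erase_connOrder {l1 l2 : List V} {v a b : V}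
    (hord : IsConnOrder G (l1 ++ v :: l2))
    (hN : G.neighborSet v = {b, a}) (ha1 : a ∈ l1) (hb1 : b ∈ l1)
    {A : Set V} (hA : ∀ x, x ∈ A ↔ x ≠ v) (hmemA : ∀ x ∈ l1 ++ l2, x ∈ A) :
    IsConnOrder (G.induce A) ((l1 ++ l2).attachWith (· ∈ A) hmemA) := by
  classical
  obtain ⟨hnd, hmem, hwit⟩ := hord
  have hmap : ((l1 ++ l2).attachWith (· ∈ A) hmemA).map Subtype.val = l1 ++ l2 := by
    have := List.attachWith_map_subtype_val hmemA
    simpa using this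
  have hndle : (l1 ++ l2).Nodup := by
    have hsub : (l1 ++ l2).Sublist (l1 ++ v :: l2) :=
      (List.sublist_cons_self v l2).append_left l1
    exact hsub.nodup hnd
  have hLlen : ((l1 ++ l2).attachWith (· ∈ A) hmemA).length = (l1 ++ l2).length :=
    List.length_attachWith
  have hlen : (l1 ++ v :: l2).length = l1.length + 1 + l2.length := by
    simp; omega
  have hlelen : (l1 ++ l2).length = l1.length + l2.length := by simp
  have hvl : ∀ (hh : l1.length < (l1 ++ v :: l2).length), (l1 ++ v :: l2)[l1.length] = v := by
    intro hh
    rw [List.getElem_append_right (le_refl l1.length)]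
    simp
  have hcompat : ∀ (t : ℕ) (ht : t < (l1 ++ l2).length),
      (l1 ++ l2)[t] = (l1 ++ v :: l2)[if t < l1.length then t else t + 1]'(by
        rw [hlen]; rw [hlelen] at ht; split <;> omega) := by
    intro t ht
    by_cases h : t < l1.length
    · simp only [if_pos h]
      rw [List.getElem_append_left h, List.getElem_append_left h]
    · simp only [if_neg h]
      push_neg at h
      rw [List.getElem_append_right h]
      rw [List.getElem_append_right (by omega : l1.length ≤ t + 1)]
      rw [List.getElem_cons]
      rw [dif_neg (by omega : ¬ (t + 1 - l1.length = 0))]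
      exact getElem_idx_congr _ (by omega) _
  refine ⟨?_, ?_, ?_⟩
  · exact List.Nodup.of_map _ (by rw [hmap]; exact hndle)
  · intro u
    have hu : (u : V) ∈ l1 ++ v :: l2 := hmem u
    have hune : (u : V) ≠ v := (hA u).1 u.2
    have hule : (u : V) ∈ l1 ++ l2 := by
      rcases List.mem_append.1 hu with h | h
      · exact List.mem_append.2 (Or.inl h)
      · rcases List.mem_cons.1 h with h | h
        · exact absurd h hune
        · exact List.mem_append.2 (Or.inr h)
    have : (u : V) ∈ ((l1 ++ l2).attachWith (· ∈ A) hmemA).map Subtype.val := by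
      rw [hmap]; exact hule
    obtain ⟨x, hx, hvx⟩ := List.mem_map.1 this
    exact (Subtype.ext hvx : x = u) ▸ hx
  · intro i hi
    have hile : (i : ℕ) < (l1 ++ l2).length := by rw [← hLlen]; exact i.2
    obtain ⟨oi, hoi⟩ : ∃ t : ℕ, t = if (i : ℕ) < l1.length then (i : ℕ) else (i : ℕ) + 1 :=
      ⟨_, rfl⟩
    have hoil : oi < (l1 ++ v :: l2).length := by
      rw [hoi, hlen]; rw [hlelen] at hile; split <;> omega
    have hoi0 : 0 < oi := by rw [hoi]; split <;> omega
    obtain ⟨j, hj, hadj⟩ := hwit ⟨oi, hoil⟩ hoi0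
    have hjoi : (j : ℕ) < oi := hj
    have hjl : (j : ℕ) < (l1 ++ v :: l2).length := j.2
    -- j is not the position of v
    have hjn1 : (j : ℕ) ≠ l1.length := by
      intro hcon
      have hjv : (l1 ++ v :: l2).get j = v := by
        rw [List.get_eq_getElem]
        rw [getElem_idx_congr _ hcon j.2]
        exact hvl _
      rw [hjv] at hadj
      have hadj2 : (l1 ++ v :: l2).get ⟨oi, hoil⟩ ∈ G.neighborSet v :=
        (G.mem_neighborSet v _).2 hadj
      rw [hN] at hadj2
      have hlt : ∀ c ∈ l1, (l1 ++ v :: l2).get ⟨oi, hoil⟩ = c → False := by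
        intro c hc hceq
        obtain ⟨m, hm, hmeq⟩ := List.mem_iff_getElem.1 hc
        have hmc : (l1 ++ v :: l2)[m]'(by rw [hlen]; omega) = c := by
          rw [List.getElem_append_left hm]
          exact hmeq
        have heq2 : (l1 ++ v :: l2)[oi] = (l1 ++ v :: l2)[m]'(by rw [hlen]; omega) := by
          rw [hmc]
          exact hceq
        have := (hnd.getElem_inj_iff).1 heq2
        omega
      rcases hadj2 with h2 | h2
      · exact hlt b hb1 h2
      · exact hlt a ha1 h2
    obtain ⟨j', hj'⟩ : ∃ t : ℕ, t = if (j : ℕ) < l1.length then (j : ℕ) else (j : ℕ) - 1 :=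
      ⟨_, rfl⟩
    have hj'cases : ((j : ℕ) < l1.length ∧ j' = (j : ℕ)) ∨
        (l1.length < (j : ℕ) ∧ j' = (j : ℕ) - 1) := by
      by_cases hcase : (j : ℕ) < l1.length
      · exact Or.inl ⟨hcase, by rw [hj', if_pos hcase]⟩
      · exact Or.inr ⟨by omega, by rw [hj', if_neg hcase]⟩
    have hoicases : ((i : ℕ) < l1.length ∧ oi = (i : ℕ)) ∨
        (l1.length ≤ (i : ℕ) ∧ oi = (i : ℕ) + 1) := by
      by_cases hcase : (i : ℕ) < l1.length
      · exact Or.inl ⟨hcase, by rw [hoi, if_pos hcase]⟩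
      · exact Or.inr ⟨by omega, by rw [hoi, if_neg hcase]⟩
    have hj'lt : j' < (i : ℕ) := by
      rcases hj'cases with ⟨h1, h2⟩ | ⟨h1, h2⟩ <;>
        rcases hoicases with ⟨h3, h4⟩ | ⟨h3, h4⟩ <;> omega
    have hj'le : j' < (l1 ++ l2).length := by
      rcases hj'cases with ⟨h1, h2⟩ | ⟨h1, h2⟩ <;> omega
    have hlej' : (l1 ++ l2)[j']'hj'le = (l1 ++ v :: l2).get j := by
      rw [List.get_eq_getElem]
      rw [hcompat j' hj'le]
      rcases hj'cases with ⟨h1, h2⟩ | ⟨h1, h2⟩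
      · have hidx : (if j' < l1.length then j' else j' + 1) = (j : ℕ) := by
          rw [h2, if_pos h1]
        exact getElem_idx_congr _ hidx _
      · have hidx : (if j' < l1.length then j' else j' + 1) = (j : ℕ) := by
          rw [h2, if_neg (by omega)]
          omega
        exact getElem_idx_congr _ hidx _
    have hlei : (l1 ++ l2)[(i : ℕ)]'hile = (l1 ++ v :: l2).get ⟨oi, hoil⟩ := by
      rw [List.get_eq_getElem, hcompat _ hile]
      exact getElem_idx_congr _ hoi.symm _
    refine ⟨⟨j', by rw [hLlen]; exact hj'le⟩, hj'lt, ?_⟩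
    have hgoal : G.Adj ((l1 ++ l2)[j']'hj'le) ((l1 ++ l2)[(i : ℕ)]'hile) := by
      rw [hlej', hlei]
      exact hadj
    have e1 : ((((l1 ++ l2).attachWith (· ∈ A) hmemA).get
        ⟨j', by rw [hLlen]; exact hj'le⟩ : ↥A) : V) = (l1 ++ l2)[j']'hj'le :=
      congrArg Subtype.val (List.getElem_attachWith _)
    have e2 : ((((l1 ++ l2).attachWith (· ∈ A) hmemA).get i : ↥A) : V)
        = (l1 ++ l2)[(i : ℕ)]'hile :=
      congrArg Subtype.val (List.getElem_attachWith _)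
    have hfinal : G.Adj ((((l1 ++ l2).attachWith (· ∈ A) hmemA).get
        ⟨j', by rw [hLlen]; exact hj'le⟩ : ↥A) : V)
        ((((l1 ++ l2).attachWith (· ∈ A) hmemA).get i : ↥A) : V) := by
      rw [e1, e2]
      exact hgoal
    exact hfinal

end Erase

section IdxHelpers
variable {α : Type*} [DecidableEq α]

lemma indexOf_cons' (u x : α) (t : List α) :
    List.idxOf u (x :: t) = if u = x then 0 else List.idxOf u t + 1 := by
  rw [List.idxOf_cons]
  by_cases h : u = x
  · simp [h]
  · simp [beq_false_of_ne (Ne.symm h), h]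

lemma indexOf_append_left {u : α} :
    ∀ {l1 : List α} (l2 : List α), u ∈ l1 →
      List.idxOf u (l1 ++ l2) = List.idxOf u l1 := by
  intro l1
  induction l1 with
  | nil => intro l2 h; simp at h
  | cons x t ih =>
    intro l2 h
    rw [List.cons_append, indexOf_cons', indexOf_cons']
    by_cases hx : u = x
    · simp [hx]
    · rw [if_neg hx, if_neg hx]
      have hmem : u ∈ t := by
        rcases List.mem_cons.1 h with h1 | h1
        · exact absurd h1 hx
        · exact h1
      rw [ih l2 hmem]

lemma indexOf_append_not_mem {u : α} {l1 : List α} (l2 : List α) (h : u ∉ l1) :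
    List.idxOf u (l1 ++ l2) = l1.length + List.idxOf u l2 :=
  List.idxOf_append_of_notMem h

end IdxHelpers

theorem stmt10 {V : Type*} [Fintype V] (G : SimpleGraph V) (l : List V)
    (hmin : MinimallyBad G) (hbad : BadOrder G l)
    (v1 : V) (hv1 : l.head? = some v1)
    (v a b : V) (hab : b ≠ a) (hN : G.neighborSet v = {b, a})
    (hba : idx l b < idx l a) :
    Xor' (v = v1 ∧ l[1]? = some b)
      (idx l b < idx l v ∧ idx l v < idx l a) ∧
    (greedy G l v = 1 ∨ greedy G l v = 2) := by
  classical
  obtain ⟨hord, hbadord⟩ := hbad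
  obtain ⟨hnd, hmem, hwit⟩ := id hord
  have hvb : G.Adj v b := (G.mem_neighborSet v b).1 (by rw [hN]; exact Set.mem_insert _ _)
  have hva : G.Adj v a := (G.mem_neighborSet v a).1
    (by rw [hN]; exact Set.mem_insert_of_mem _ rfl)
  have hvnea : v ≠ a := G.ne_of_adj hva
  have hvneb : v ≠ b := G.ne_of_adj hvb
  have hnbr : ∀ w, G.Adj v w → w = b ∨ w = a := by
    intro w hw
    have hmem' : w ∈ G.neighborSet v := (G.mem_neighborSet v w).2 hw
    rw [hN] at hmem'
    simpa using hmem'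
  have hmemv : v ∈ l := hmem v
  have hmema : a ∈ l := hmem a
  have hmemb : b ∈ l := hmem b
  have hidxv : idx l v < l.length := by
    rw [idx]; exact List.idxOf_lt_length_iff.2 hmemv
  have hidxa : idx l a < l.length := by
    rw [idx]; exact List.idxOf_lt_length_iff.2 hmema
  have hidxb : idx l b < l.length := by
    rw [idx]; exact List.idxOf_lt_length_iff.2 hmemb
  have hgetv : l.get ⟨idx l v, hidxv⟩ = v := List.idxOf_get _
  have hgeta : l.get ⟨idx l a, hidxa⟩ = a := List.idxOf_get _
  have hgetb : l.get ⟨idx l b, hidxb⟩ = b := List.idxOf_get _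
  have hv1idx : v = v1 → idx l v = 0 := by
    intro hvv1
    obtain ⟨x, t, hxt⟩ : ∃ x t, l = x :: t := by
      cases l with
      | nil => exact absurd hmemv (List.not_mem_nil)
      | cons x t => exact ⟨x, t, rfl⟩
    rw [hxt] at hv1
    simp only [List.head?_cons, Option.some.injEq] at hv1
    rw [hxt, idx, indexOf_cons', if_pos (hvv1.trans hv1.symm)]
  -- trichotomy v vs b
  rcases Nat.lt_trichotomy (idx l v) (idx l b) with hvb' | hvb' | hvb'
  · -- Case (i): v is the first vertex
    have hvlta : idx l v < idx l a := lt_trans hvb' hba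
    have hidx0 : idx l v = 0 := by
      by_contra h0
      obtain ⟨j, hj, hadj⟩ := hwit ⟨idx l v, hidxv⟩ (by show 0 < idx l v; omega)
      have hj2 : (j : ℕ) < idx l v := hj
      rw [hgetv] at hadj
      rcases hnbr _ hadj.symm with hjb | hja
      · have hthis : idx l (l.get j) = (j : ℕ) := List.get_idxOf hnd j
        rw [hjb] at hthis
        omega
      · have hthis : idx l (l.get j) = (j : ℕ) := List.get_idxOf hnd j
        rw [hja] at hthis
        omega
    -- l = v :: t
    obtain ⟨x, t, rfl⟩ : ∃ x t, l = x :: t := by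
      cases l with
      | nil => exact absurd hmemv (List.not_mem_nil)
      | cons x t => exact ⟨x, t, rfl⟩
    have hxv1 : x = v1 := by
      simp only [List.head?_cons, Option.some.injEq] at hv1
      exact hv1
    have hvx : v = x := by
      by_contra hne
      rw [idx, indexOf_cons', if_neg hne] at hidx0
      omega
    -- second element is b
    have hbt : b ∈ t := by
      rcases List.mem_cons.1 hmemb with h | h
      · exact absurd (hvx ▸ h.symm) hvneb
      · exact h
    obtain ⟨y, t', rfl⟩ : ∃ y t', t = y :: t' := by
      cases t with
      | nil => exact absurd hbt (List.not_mem_nil)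
      | cons y t' => exact ⟨y, t', rfl⟩
    have hlen2 : 1 < (x :: y :: t').length := by simp
    obtain ⟨j, hj, hadj⟩ := hwit ⟨1, hlen2⟩ (by show (0:ℕ) < 1; omega)
    have hj2 : (j : ℕ) < 1 := hj
    have hj0 : j = ⟨0, by simp⟩ := Fin.ext (by show (j : ℕ) = 0; omega)
    rw [hj0] at hadj
    have hadj' : G.Adj x y := hadj
    rw [← hvx] at hadj'
    have hyb : y = b := by
      rcases hnbr _ hadj' with h | h
      · exact h
      · exfalso
        have hxney : x ≠ y := fun hh => hvnea ((hvx.trans hh).trans h)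
        have hidxy : idx (x :: y :: t') y = 1 := by
          rw [idx, indexOf_cons', if_neg (fun hh : y = x => hxney hh.symm),
            List.idxOf_cons_self]
        have hbnex : b ≠ x := fun hh => hvneb (hvx.trans hh.symm)
        have hidxb' : idx (x :: y :: t') b = List.idxOf b (y :: t') + 1 := by
          rw [idx, indexOf_cons', if_neg hbnex]
        rw [← h] at hba
        omega
    have hcol : greedy G (x :: y :: t') v = 1 := by
      rw [hvx]
      have hxt : x ∉ y :: t' := (List.nodup_cons.1 hnd).1
      have hdec : x :: y :: t' = [] ++ x :: (y :: t') := rfl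
      rw [greedy, hdec, greedy_eq_step _ hxt]
      refine Nat.le_antisymm ?_ (greedyStep_self _ _).1
      exact greedyStep_le _ _ (le_refl 1) (fun w _ => by simp [greedyFrom])
    refine ⟨Or.inl ⟨⟨hvx.trans hxv1, ?_⟩, ?_⟩, Or.inl hcol⟩
    · simp [hyb]
    · rintro ⟨hq1, _⟩
      omega
  · -- impossible: v = b
    exfalso
    have : l.get ⟨idx l v, hidxv⟩ = l.get ⟨idx l b, hidxb⟩ := by
      congr 1
      exact Fin.ext hvb'
    rw [hgetv, hgetb] at this
    exact hvneb this
  · -- b before v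
    rcases Nat.lt_trichotomy (idx l v) (idx l a) with hva' | hva' | hva'
    · -- Case (ii)
      obtain ⟨l1, l2, hldec⟩ := List.append_of_mem hmemv
      have hnd' : (l1 ++ v :: l2).Nodup := hldec ▸ hnd
      have hvnl1 : v ∉ l1 := fun hvl1 =>
        (List.disjoint_of_nodup_append hnd') hvl1 (List.mem_cons_self)
      have hvnl2 : v ∉ l2 := (List.nodup_cons.1 (List.Nodup.of_append_right hnd')).1
      have hidxvl : idx l v = l1.length := by
        rw [hldec, idx, indexOf_append_not_mem _ hvnl1, List.idxOf_cons_self]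
        omega
      have hanl1 : a ∉ l1 := by
        intro hal1
        have heq : idx l a = List.idxOf a l1 := by
          rw [hldec, idx, indexOf_append_left _ hal1]
        have h2 : List.idxOf a l1 < l1.length := List.idxOf_lt_length_iff.2 hal1
        omega
      have hF1a : greedyFrom G (fun _ => 0) l1 a = 0 := greedyFrom_not_mem _ hanl1
      have hstep : greedy G l v = greedyStep G (greedyFrom G (fun _ => 0) l1) v v := by
        rw [hldec, greedy, greedy_eq_step _ hvnl2]
      have hle2 : greedyStep G (greedyFrom G (fun _ => 0) l1) v v ≤ 2 := by
        by_cases hFb : greedyFrom G (fun _ => 0) l1 b = 1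
        · refine greedyStep_le _ _ (by omega) ?_
          intro w hw
          rcases hnbr w hw with rfl | rfl
          · rw [hFb]; omega
          · rw [hF1a]; omega
        · refine le_trans (greedyStep_le _ _ (le_refl 1) ?_) (by omega)
          intro w hw
          rcases hnbr w hw with rfl | rfl
          · exact hFb
          · rw [hF1a]; omega
      have hge1 : 1 ≤ greedy G l v := greedy_pos hnd hmemv
      have hle2' : greedy G l v ≤ 2 := by rw [hstep]; exact hle2
      refine ⟨Or.inr ⟨⟨hvb', hva'⟩, ?_⟩, by omega⟩
      rintro ⟨hp1, _⟩
      have := hv1idx hp1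
      omega
    · exfalso
      have : l.get ⟨idx l v, hidxv⟩ = l.get ⟨idx l a, hidxa⟩ := by
        congr 1
        exact Fin.ext hva'
      rw [hgetv, hgeta] at this
      exact hvnea this
    · -- impossible case: both neighbours before v
      exfalso
      obtain ⟨l1, l2, hldec⟩ := List.append_of_mem hmemv
      subst hldec
      have hvnl1 : v ∉ l1 := fun hvl1 =>
        (List.disjoint_of_nodup_append hnd) hvl1 (List.mem_cons_self)
      have hvnl2 : v ∉ l2 := (List.nodup_cons.1 (List.Nodup.of_append_right hnd)).1
      have hidxvl : idx (l1 ++ v :: l2) v = l1.length := by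
        rw [idx, indexOf_append_not_mem _ hvnl1, List.idxOf_cons_self]
        omega
      have hmeml1 : ∀ {c : V}, idx (l1 ++ v :: l2) c < l1.length → c ∈ l1 := by
        intro c hcidx
        by_contra hcl1
        rw [idx, indexOf_append_not_mem _ hcl1] at hcidx
        omega
      have hal1 : a ∈ l1 := hmeml1 (by omega)
      have hbl1 : b ∈ l1 := hmeml1 (by omega)
      have hanl2 : a ∉ l2 := fun h2 =>
        (List.disjoint_of_nodup_append hnd) hal1 (List.mem_cons_of_mem _ h2)
      have hbnl2 : b ∉ l2 := fun h2 =>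
        (List.disjoint_of_nodup_append hnd) hbl1 (List.mem_cons_of_mem _ h2)
      have hA : ∀ x : V, x ∈ (↑(Finset.univ.erase v) : Set V) ↔ x ≠ v := by
        intro x; simp
      have hsne : Finset.univ.erase v ≠ Finset.univ := by
        intro hh
        have hv' : v ∈ Finset.univ.erase v := by rw [hh]; exact Finset.mem_univ v
        simp at hv'
      have hmemA : ∀ x ∈ l1 ++ l2, x ∈ (↑(Finset.univ.erase v) : Set V) := by
        intro x hx
        rw [hA]
        rintro rfl
        rcases List.mem_append.1 hx with h | h
        · exact hvnl1 h
        · exact hvnl2 h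
      have hord2 : IsConnOrder (G.induce (↑(Finset.univ.erase v) : Set V))
          ((l1 ++ l2).attachWith (· ∈ (↑(Finset.univ.erase v) : Set V)) hmemA) :=
        erase_connOrder hord hN hal1 hbl1 hA hmemA
      have hnnil : l1 ++ l2 ≠ [] := by
        intro hh
        rw [List.append_eq_nil_iff] at hh
        rw [hh.1] at hal1
        exact List.not_mem_nil hal1
      have hLne : (l1 ++ l2).attachWith (· ∈ (↑(Finset.univ.erase v) : Set V)) hmemA ≠ [] := by
        intro hh
        apply hnnil
        have hlen0 := congrArg List.length hh
        rw [List.length_attachWith] at hlen0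
        simp only [List.length_nil] at hlen0
        exact List.length_eq_zero_iff.1 hlen0
      have hconn2 := connected_of_connOrder hord2 hLne
      have hGood := hmin.2 (Finset.univ.erase v) hsne hconn2
      have hbound := goodOrder_of_good hGood hconn2 hord2
      have hmap : (((l1 ++ l2).attachWith (· ∈ (↑(Finset.univ.erase v) : Set V))
          hmemA)).map Subtype.val = l1 ++ l2 := by
        have := List.attachWith_map_subtype_val hmemA
        simpa using this
      have htrans : ∀ u : ↥(↑(Finset.univ.erase v) : Set V),
          greedy (G.induce (↑(Finset.univ.erase v) : Set V))
            ((l1 ++ l2).attachWith (· ∈ (↑(Finset.univ.erase v) : Set V)) hmemA) u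
            = greedy G (l1 ++ l2) u.val := by
        intro u
        have hh := greedyFrom_induce (G := G) (↑(Finset.univ.erase v) : Set V)
          ((l1 ++ l2).attachWith (· ∈ (↑(Finset.univ.erase v) : Set V)) hmemA)
          (fun _ => 0) (fun _ => 0) (fun _ => rfl) (fun _ _ => rfl) u
        rw [hmap] at hh
        exact hh
      have hofflist : ∀ x ∈ l2, ¬ G.Adj x v := by
        intro x hx hadjx
        rcases hnbr x hadjx.symm with rfl | rfl
        · exact hbnl2 hx
        · exact hanl2 hx
      have hsame : ∀ u : V, u ≠ v → greedy G (l1 ++ v :: l2) u = greedy G (l1 ++ l2) u := by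
        intro u hu
        rw [greedy, greedy, greedyFrom_append, greedyFrom_append, greedyFrom_cons]
        exact greedyFrom_congr_off v l2 _ _ (fun w hw => greedyStep_ne _ hw) hofflist u hu
      have hboundG : ∀ u : V, u ≠ v → greedy G (l1 ++ v :: l2) u ≤ chi G := by
        intro u hu
        have huA : u ∈ (↑(Finset.univ.erase v) : Set V) := (hA u).2 hu
        have h1 := hbound ⟨u, huA⟩
        rw [htrans ⟨u, huA⟩] at h1
        calc greedy G (l1 ++ v :: l2) u = greedy G (l1 ++ l2) u := hsame u hu
          _ ≤ chi (G.induce (↑(Finset.univ.erase v) : Set V)) := h1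
          _ ≤ chi G := chi_induce_le G _
      have hbadv : chi G < greedy G (l1 ++ v :: l2) v := by
        have hex : ∃ u0, chi G < greedy G (l1 ++ v :: l2) u0 := by
          by_contra hno
          push_neg at hno
          exact hbadord (fun u => hno u)
        obtain ⟨u0, hu0⟩ := hex
        by_cases hu0v : u0 = v
        · rwa [hu0v] at hu0
        · exact absurd (hboundG u0 hu0v) (by omega)
      have hstep : greedy G (l1 ++ v :: l2) v
          = greedyStep G (greedyFrom G (fun _ => 0) l1) v v := greedy_eq_step _ hvnl2
      obtain ⟨c0, hc01, hc03, hca, hcb⟩ : ∃ c0, 1 ≤ c0 ∧ c0 ≤ 3 ∧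
          greedyFrom G (fun _ => 0) l1 a ≠ c0 ∧ greedyFrom G (fun _ => 0) l1 b ≠ c0 := by
        by_cases h1 : greedyFrom G (fun _ => 0) l1 a = 1
        · by_cases h2 : greedyFrom G (fun _ => 0) l1 b = 2
          · exact ⟨3, by omega, by omega, by omega, by omega⟩
          · exact ⟨2, by omega, by omega, by omega, h2⟩
        · by_cases h2 : greedyFrom G (fun _ => 0) l1 b = 1
          · by_cases h3 : greedyFrom G (fun _ => 0) l1 a = 2
            · exact ⟨3, by omega, by omega, by omega, by omega⟩
            · exact ⟨2, by omega, by omega, h3, by omega⟩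
          · exact ⟨1, le_refl 1, by omega, h1, h2⟩
      have hv3 : greedy G (l1 ++ v :: l2) v ≤ 3 := by
        rw [hstep]
        refine le_trans (greedyStep_le _ _ hc01 ?_) hc03
        intro w hw
        rcases hnbr w hw with rfl | rfl
        · exact hcb
        · exact hca
      have hchile2 : chi G ≤ 2 := by omega
      have hchige2 : 2 ≤ chi G := two_le_chi_of_adj hva
      have hcol2 : G.Colorable 2 := (colorable_chi G).mono hchile2
      have hle2 := greedy_le_two hcol2 hord v
      omega
end

section
/- Let G be a minimally bad graph and O a bad connected order of G with greedy colouring π = π_{G,O}. Then for every flat path P in G, every internal vertex u of P satisfies π(u) ∈ {1,2}; consequently, since consecutive internal vertices are adjacent, the colours of the internal vertices of P alternate between 1 and 2 along P. -/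
namespace Aux
variable {V : Type*}

/-- the set of available colours -/
def avail (G : SimpleGraph V) (f : V → ℕ) (v : V) : Set ℕ :=
  {c : ℕ | 1 ≤ c ∧ ∀ w, G.Adj v w → f w ≠ c}

lemma greedyStep_self (G : SimpleGraph V) (f : V → ℕ) (v : V) :
    greedyStep G f v v = sInf (avail G f v) := by simp [greedyStep, avail]

lemma greedyStep_ne (G : SimpleGraph V) (f : V → ℕ) (v u : V) (h : u ≠ v) :
    greedyStep G f v u = f u := by simp [greedyStep, h]

lemma greedyFrom_cons (G : SimpleGraph V) (f : V → ℕ) (a : V) (t : List V) :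
    greedyFrom G f (a :: t) = greedyFrom G (greedyStep G f a) t := rfl

lemma greedyFrom_append (G : SimpleGraph V) (f : V → ℕ) (a b : List V) :
    greedyFrom G f (a ++ b) = greedyFrom G (greedyFrom G f a) b := by
  simp [greedyFrom, List.foldl_append]

lemma greedyFrom_of_not_mem (G : SimpleGraph V) (f : V → ℕ) (l : List V) (v : V)
    (hv : v ∉ l) : greedyFrom G f l v = f v := by
  induction l generalizing f with
  | nil => rfl
  | cons a t ih =>
    simp only [List.mem_cons, not_or] at hv
    rw [greedyFrom_cons, ih _ hv.2, greedyStep_ne _ _ _ _ hv.1]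

lemma avail_nonempty [Fintype V] (G : SimpleGraph V) (f : V → ℕ) (v : V) :
    (avail G f v).Nonempty := by
  refine ⟨(Finset.univ.sup f) + 1, by omega, fun w _ => ?_⟩
  have : f w ≤ Finset.univ.sup f := Finset.le_sup (Finset.mem_univ w)
  omega

lemma sInf_avail_mem [Fintype V] (G : SimpleGraph V) (f : V → ℕ) (v : V) :
    sInf (avail G f v) ∈ avail G f v := Nat.sInf_mem (avail_nonempty G f v)

/-- stability: the value of a vertex in a prefix is its final value -/
lemma greedy_eq_prefix (G : SimpleGraph V) (x y : List V) (v : V) (hv : v ∉ y) :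
    greedy G (x ++ y) v = greedy G x v := by
  rw [greedy, greedyFrom_append, greedyFrom_of_not_mem _ _ _ _ hv]; rfl

/-- the value formula at position i -/
lemma greedy_get (G : SimpleGraph V) (l : List V) (hl : l.Nodup) (i : ℕ) (hi : i < l.length) :
    greedy G l (l.get ⟨i, hi⟩) = sInf (avail G (greedyFrom G (fun _ => 0) (l.take i)) (l.get ⟨i, hi⟩)) := by
  set v := l.get ⟨i, hi⟩ with hv
  have hdec : l = l.take i ++ (v :: l.drop (i+1)) := by
    conv_lhs => rw [← List.take_append_drop i l]
    rw [List.drop_eq_getElem_cons hi]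
    rfl
  have hnd : (l.take i ++ (v :: l.drop (i+1))).Nodup := hdec ▸ hl
  rw [List.nodup_append] at hnd
  have hvd : v ∉ l.drop (i+1) := by
    have := hnd.2.1
    simp only [List.nodup_cons] at this
    exact this.1
  conv_lhs => rw [hdec]
  rw [greedy, greedyFrom_append, greedyFrom_cons, greedyFrom_of_not_mem _ _ _ _ hvd,
    greedyStep_self]

lemma greedy_pos (G : SimpleGraph V) [Fintype V] (l : List V) (hl : l.Nodup) (v : V)
    (hv : v ∈ l) : 1 ≤ greedy G l v := by
  obtain ⟨⟨i, hi⟩, rfl⟩ := List.mem_iff_get.mp hv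
  rw [greedy_get G l hl i hi]
  exact (sInf_avail_mem G _ _).1

lemma mem_take_iff {l : List V} {i : ℕ} {w : V} (hi : i < l.length) :
    w ∈ l.take i ↔ ∃ j : ℕ, ∃ hj : j < l.length, j < i ∧ l.get ⟨j, hj⟩ = w := by
  constructor
  · intro h
    obtain ⟨⟨j, hj⟩, rfl⟩ := List.mem_iff_get.mp h
    have hj' : j < i := by
      have h2 := hj; rw [List.length_take] at h2; omega
    have hjl : j < l.length := by omega
    exact ⟨j, hjl, hj', by simp [List.get_eq_getElem, List.getElem_take]⟩
  · rintro ⟨j, hj, hji, rfl⟩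
    apply List.mem_iff_get.mpr
    refine ⟨⟨j, by simp [List.length_take]; omega⟩, ?_⟩
    simp [List.get_eq_getElem, List.getElem_take]

/-- prefix values are final values -/
lemma greedyFrom_take_eq (G : SimpleGraph V) (l : List V) (hl : l.Nodup) (i : ℕ)
    (w : V) (hw : w ∈ l.take i) :
    greedyFrom G (fun _ => 0) (l.take i) w = greedy G l w := by
  have : greedy G l w = greedy G (l.take i ++ l.drop i) w := by rw [List.take_append_drop]
  rw [this, greedy_eq_prefix]
  · rfl
  · have hnd : (l.take i ++ l.drop i).Nodup := by rw [List.take_append_drop]; exact hl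
    rw [List.nodup_append] at hnd
    exact fun hmem => hnd.2.2 w hw w hmem rfl

/-- greedy colourings are proper -/
lemma greedy_proper (G : SimpleGraph V) [Fintype V] (l : List V) (hl : l.Nodup)
    {u v : V} (hu : u ∈ l) (hv : v ∈ l) (hadj : G.Adj u v) :
    greedy G l u ≠ greedy G l v := by
  obtain ⟨⟨i, hi⟩, rfl⟩ := List.mem_iff_get.mp hu
  obtain ⟨⟨j, hj⟩, rfl⟩ := List.mem_iff_get.mp hv
  suffices H : ∀ i j (hi : i < l.length) (hj : j < l.length), i < j →
      G.Adj (l.get ⟨i, hi⟩) (l.get ⟨j, hj⟩) →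
      greedy G l (l.get ⟨i, hi⟩) ≠ greedy G l (l.get ⟨j, hj⟩) by
    rcases lt_trichotomy i j with h | h | h
    · exact H i j hi hj h hadj
    · subst h; exact absurd rfl (G.ne_of_adj hadj)
    · exact (H j i hj hi h hadj.symm).symm
  clear hu hv hadj i j hi hj
  intro i j hi hj hij hadj
  have h1 := greedy_get G l hl j hj
  have hmem := sInf_avail_mem G (greedyFrom G (fun _ => 0) (l.take j)) (l.get ⟨j, hj⟩)
  rw [← h1] at hmem
  have hut : l.get ⟨i, hi⟩ ∈ l.take j := (mem_take_iff hj).mpr ⟨i, hi, hij, rfl⟩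
  have := hmem.2 _ hadj.symm
  rw [greedyFrom_take_eq G l hl _ _ hut] at this
  exact this

lemma avail_le_deg [Fintype V] (G : SimpleGraph V) (f : V → ℕ) (v : V) :
    sInf (avail G f v) ≤ (G.neighborSet v).ncard + 1 := by
  classical
  set N : Finset V := (G.neighborSet v).toFinset with hN
  have hcard : N.card = (G.neighborSet v).ncard := (Set.ncard_eq_toFinset_card' _).symm
  have hsub : ¬ (Finset.Icc 1 (N.card + 1) ⊆ N.image f) := by
    intro hsub
    have h1 := Finset.card_le_card hsub
    have h2 : (N.image f).card ≤ N.card := Finset.card_image_le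
    rw [Nat.card_Icc] at h1
    omega
  obtain ⟨c, hc1, hc2⟩ := Finset.not_subset.mp hsub
  rw [Finset.mem_Icc] at hc1
  have : c ∈ avail G f v := by
    refine ⟨hc1.1, fun w hw he => hc2 ?_⟩
    exact Finset.mem_image.mpr ⟨w, by simp [hN, hw], he⟩
  calc sInf (avail G f v) ≤ c := Nat.sInf_le this
    _ ≤ _ := by omega

lemma eq_three_struct (G : SimpleGraph V) (f : V → ℕ) (v : V)
    (h : sInf (avail G f v) = 3) :
    (∃ w, G.Adj v w ∧ f w = 1) ∧ (∃ w, G.Adj v w ∧ f w = 2) := by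
  have h1 : (1 : ℕ) ∉ avail G f v := Nat.notMem_of_lt_sInf (by omega)
  have h2 : (2 : ℕ) ∉ avail G f v := Nat.notMem_of_lt_sInf (by omega)
  simp only [avail, Set.mem_setOf_eq, not_and, not_forall] at h1 h2
  obtain ⟨w1, hw1, he1⟩ := h1 (by norm_num)
  obtain ⟨w2, hw2, he2⟩ := h2 (by norm_num)
  push_neg at he1 he2
  exact ⟨⟨w1, hw1, he1⟩, ⟨w2, hw2, he2⟩⟩

lemma fin2_eq (x y z : Fin 2) (h1 : x ≠ y) (h2 : z ≠ y) : x = z := by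
  revert h1 h2; revert x y z; decide

/-- a connected order on a 2-colorable graph uses colours 1 and 2 only -/
lemma two_col_greedy [Fintype V] (G : SimpleGraph V) (l : List V)
    (hl : IsConnOrder G l) (C : G.Coloring (Fin 2)) (h0 : 0 < l.length) :
    ∀ i (hi : i < l.length),
      greedy G l (l.get ⟨i, hi⟩) = if C (l.get ⟨i, hi⟩) = C (l.get ⟨0, h0⟩) then 1 else 2 := by
  obtain ⟨hnd, hmem, hconn⟩ := hl
  intro i
  induction i using Nat.strong_induction_on with
  | _ i IH =>
    intro hi
    set v := l.get ⟨i, hi⟩ with hv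
    set F := greedyFrom G (fun _ => 0) (l.take i) with hF
    have hgv := greedy_get G l hnd i hi
    have hnbr : ∀ w, G.Adj v w → F w = 0 ∨
        (F w = if C w = C (l.get ⟨0, h0⟩) then 1 else 2) := by
      intro w hw
      by_cases hmemw : w ∈ l.take i
      · right
        rw [hF, greedyFrom_take_eq G l hnd i w hmemw]
        obtain ⟨j, hjl, hji, rfl⟩ := (mem_take_iff hi).mp hmemw
        exact IH j hji hjl
      · left
        rw [hF, greedyFrom_of_not_mem _ _ _ _ hmemw]
    by_cases hroot : C v = C (l.get ⟨0, h0⟩)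
    · rw [if_pos hroot, hgv]
      have h1av : 1 ∈ avail G F v := by
        refine ⟨le_refl _, fun w hw he => ?_⟩
        rcases hnbr w hw with h | h
        · omega
        · have hne : C w ≠ C v := (C.valid hw).symm
          rw [← hroot] at h
          rw [if_neg hne] at h; omega
      have hle := Nat.sInf_le h1av
      have hmem1 := Nat.sInf_mem (⟨1, h1av⟩ : (avail G F v).Nonempty)
      have h2 := hmem1.1
      rw [hF, hv] at hle h2
      omega
    · rw [if_neg hroot, hgv]
      have hipos : 0 < i := by
        rcases Nat.eq_zero_or_pos i with rfl | h
        · exact absurd rfl hroot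
        · exact h
      obtain ⟨⟨j, hjl⟩, hji, hadj⟩ := hconn ⟨i, hi⟩ hipos
      set w0 := l.get ⟨j, hjl⟩ with hw0
      have hw0t : w0 ∈ l.take i := (mem_take_iff hi).mpr ⟨j, hjl, hji, rfl⟩
      have hCw0 : C w0 = C (l.get ⟨0, h0⟩) :=
        fin2_eq _ _ _ (C.valid hadj) (fun h => hroot h.symm)
      have hFw0 : F w0 = 1 := by
        rw [hF, greedyFrom_take_eq G l hnd i w0 hw0t, IH j hji hjl, if_pos hCw0]
      have h2av : 2 ∈ avail G F v := by
        refine ⟨by norm_num, fun w hw he => ?_⟩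
        rcases hnbr w hw with h | h
        · omega
        · have hCw : C w = C (l.get ⟨0, h0⟩) :=
            fin2_eq _ _ _ ((C.valid hw).symm) (fun h => hroot h.symm)
          rw [if_pos hCw] at h; omega
      have h1nav : (1 : ℕ) ∉ avail G F v := by
        intro h1av
        exact h1av.2 w0 hadj.symm hFw0
      have hle := Nat.sInf_le h2av
      have hmemI := Nat.sInf_mem (⟨2, h2av⟩ : (avail G F v).Nonempty)
      have h1 := hmemI.1
      have hne1 : sInf (avail G F v) ≠ 1 := fun h => h1nav (h ▸ hmemI)
      rw [hF, hv] at hle h1 hne1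
      omega

lemma connected_of_connOrder (G : SimpleGraph V) (l : List V) (hl : IsConnOrder G l)
    (hne : Nonempty V) : G.Connected := by
  obtain ⟨hnd, hmem, hconn⟩ := hl
  have h0 : 0 < l.length := by
    obtain ⟨v⟩ := hne
    exact List.length_pos_iff.mpr (List.ne_nil_of_mem (hmem v))
  have hreach : ∀ i (hi : i < l.length), G.Reachable (l.get ⟨0, h0⟩) (l.get ⟨i, hi⟩) := by
    intro i
    induction i using Nat.strong_induction_on with
    | _ i IH =>
      intro hi
      rcases Nat.eq_zero_or_pos i with rfl | hpos
      · exact SimpleGraph.Reachable.refl _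
      · obtain ⟨⟨j, hjl⟩, hji, hadj⟩ := hconn ⟨i, hi⟩ hpos
        exact (IH j hji hjl).trans hadj.reachable
  constructor
  intro u v
  obtain ⟨⟨i, hi⟩, rfl⟩ := List.mem_iff_get.mp (hmem u)
  obtain ⟨⟨j, hj⟩, rfl⟩ := List.mem_iff_get.mp (hmem v)
  exact (hreach i hi).symm.trans (hreach j hj)

lemma avail_congr (G : SimpleGraph V) (f g : V → ℕ) (v : V)
    (h : ∀ w, G.Adj v w → f w = g w) : avail G f v = avail G g v := by
  ext c
  constructor
  · rintro ⟨h1, h2⟩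
    exact ⟨h1, fun w hw => (h w hw) ▸ h2 w hw⟩
  · rintro ⟨h1, h2⟩
    exact ⟨h1, fun w hw => (h w hw).symm ▸ h2 w hw⟩

lemma greedyFrom_congr_off (G : SimpleGraph V) (u : V) (B : List V)
    (hB : ∀ b ∈ B, ¬ G.Adj u b) :
    ∀ (f g : V → ℕ), (∀ w, w ≠ u → f w = g w) →
      ∀ w, w ≠ u → greedyFrom G f B w = greedyFrom G g B w := by
  induction B with
  | nil => exact fun f g hfg => hfg
  | cons b t ih =>
    intro f g hfg w hw
    rw [greedyFrom_cons, greedyFrom_cons]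
    refine ih (fun x hx => hB x (List.mem_cons_of_mem _ hx)) _ _ ?_ w hw
    intro x hx
    by_cases hxb : x = b
    · subst hxb
      rw [greedyStep_self, greedyStep_self]
      congr 1
      apply avail_congr
      intro w' hw'
      have hwu : w' ≠ u := by
        rintro rfl
        exact hB x List.mem_cons_self hw'.symm
      exact hfg w' hwu
    · rw [greedyStep_ne _ _ _ _ hxb, greedyStep_ne _ _ _ _ hxb]
      exact hfg x hx

lemma greedy_erase (G : SimpleGraph V) (A B : List V) (u : V)
    (hB : ∀ b ∈ B, ¬ G.Adj u b) :
    ∀ w, w ≠ u → greedy G (A ++ u :: B) w = greedy G (A ++ B) w := by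
  intro w hw
  rw [greedy, greedy, greedyFrom_append, greedyFrom_append, greedyFrom_cons]
  exact greedyFrom_congr_off G u B hB _ _ (fun x hx => greedyStep_ne _ _ _ _ hx) w hw

lemma avail_induce (G : SimpleGraph V) (s : Set V) (f : V → ℕ) (fh : ↥s → ℕ)
    (a : V) (ha : a ∈ s) (h0 : ∀ w, w ∉ s → f w = 0)
    (hfh : ∀ w (hw : w ∈ s), f w = fh ⟨w, hw⟩) :
    avail (G.induce s) fh ⟨a, ha⟩ = avail G f a := by
  ext c
  constructor
  · rintro ⟨hc1, hc2⟩
    refine ⟨hc1, fun w hw he => ?_⟩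
    by_cases hws : w ∈ s
    · exact hc2 ⟨w, hws⟩ hw ((hfh w hws) ▸ he)
    · rw [h0 w hws] at he; omega
  · rintro ⟨hc1, hc2⟩
    refine ⟨hc1, fun w hw he => ?_⟩
    refine hc2 w.1 hw ?_
    rw [hfh w.1 w.2, Subtype.coe_eta]
    exact he

lemma greedyFrom_induce (G : SimpleGraph V) (s : Set V) :
    ∀ (L : List V) (hLs : ∀ v ∈ L, v ∈ s) (f : V → ℕ) (fh : ↥s → ℕ),
      (∀ w, w ∉ s → f w = 0) → (∀ w (hw : w ∈ s), f w = fh ⟨w, hw⟩) →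
      ∀ (v : V) (hv : v ∈ s),
        greedyFrom (G.induce s) fh (L.pmap (fun v h => (⟨v, h⟩ : ↥s)) hLs) ⟨v, hv⟩ =
        greedyFrom G f L v := by
  intro L
  induction L with
  | nil => intro _ f fh _ hfh v hv; exact (hfh v hv).symm
  | cons a t ih =>
    intro hLs f fh h0 hfh v hv
    have has : a ∈ s := hLs a List.mem_cons_self
    rw [List.pmap, greedyFrom_cons, greedyFrom_cons]
    refine ih _ (greedyStep G f a) (greedyStep (G.induce s) fh ⟨a, has⟩) ?_ ?_ v hv
    · intro w hws
      rw [greedyStep_ne]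
      · exact h0 w hws
      · rintro rfl; exact hws has
    · intro w hws
      by_cases hwa : w = a
      · subst hwa
        rw [greedyStep_self, greedyStep_self, avail_induce G s f fh w hws h0 hfh]
      · rw [greedyStep_ne _ _ _ _ hwa, greedyStep_ne]
        · exact hfh w hws
        · exact fun h => hwa (congrArg Subtype.val h)

lemma greedy_induce (G : SimpleGraph V) (s : Set V) (L : List V) (hLs : ∀ v ∈ L, v ∈ s)
    (v : V) (hv : v ∈ s) :
    greedy (G.induce s) (L.pmap (fun v h => (⟨v, h⟩ : ↥s)) hLs) ⟨v, hv⟩ = greedy G L v :=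
  greedyFrom_induce G s L hLs _ _ (fun _ _ => rfl) (fun _ _ => rfl) v hv

section Transfer

variable {W : Type*} (e : V ≃ W) (G1 : SimpleGraph V) (G2 : SimpleGraph W)

lemma avail_equiv (hAdj : ∀ a b, G1.Adj a b ↔ G2.Adj (e a) (e b))
    (f1 : V → ℕ) (f2 : W → ℕ) (hf : ∀ v, f1 v = f2 (e v)) (v : V) :
    avail G1 f1 v = avail G2 f2 (e v) := by
  ext c
  constructor
  · rintro ⟨h1, h2⟩
    refine ⟨h1, fun w hw he => ?_⟩
    refine h2 (e.symm w) ?_ ?_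
    · rw [hAdj]; simpa using hw
    · rw [hf]; simpa using he
  · rintro ⟨h1, h2⟩
    refine ⟨h1, fun w hw he => h2 (e w) ((hAdj v w).mp hw) ((hf w) ▸ he)⟩

lemma greedyFrom_equiv (hAdj : ∀ a b, G1.Adj a b ↔ G2.Adj (e a) (e b)) :
    ∀ (L : List V) (f1 : V → ℕ) (f2 : W → ℕ), (∀ v, f1 v = f2 (e v)) →
      ∀ v, greedyFrom G1 f1 L v = greedyFrom G2 f2 (L.map e) (e v) := by
  intro L
  induction L with
  | nil => intro f1 f2 hf v; exact hf v
  | cons a t ih =>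
    intro f1 f2 hf v
    rw [List.map_cons, greedyFrom_cons, greedyFrom_cons]
    refine ih _ _ ?_ v
    intro x
    by_cases hxa : x = a
    · subst hxa
      rw [greedyStep_self, greedyStep_self, avail_equiv e G1 G2 hAdj f1 f2 hf x]
    · rw [greedyStep_ne _ _ _ _ hxa, greedyStep_ne _ _ _ _ (fun h => hxa (e.injective h))]
      exact hf x

lemma greedy_equiv (hAdj : ∀ a b, G1.Adj a b ↔ G2.Adj (e a) (e b)) (L : List V) (v : V) :
    greedy G1 L v = greedy G2 (L.map e) (e v) :=
  greedyFrom_equiv e G1 G2 hAdj L (fun _ => 0) (fun _ => 0) (fun _ => rfl) v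

lemma connOrder_equiv (hAdj : ∀ a b, G1.Adj a b ↔ G2.Adj (e a) (e b)) (L : List V)
    (hL : IsConnOrder G1 L) : IsConnOrder G2 (L.map e) := by
  obtain ⟨hnd, hmem, hconn⟩ := hL
  refine ⟨hnd.map e.injective, ?_, ?_⟩
  · intro w
    rw [List.mem_map]
    exact ⟨e.symm w, hmem _, by simp⟩
  · intro i hi
    have hlen : (L.map e).length = L.length := List.length_map _
    obtain ⟨j, hj, hadj⟩ := hconn ⟨i.1, by omega⟩ hi
    refine ⟨⟨j.1, by omega⟩, hj, ?_⟩
    have h1 : (L.map e).get ⟨j.1, by omega⟩ = e (L.get j) := by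
      simp [List.get_eq_getElem, List.getElem_map]
    have h2 : (L.map e).get i = e (L.get ⟨i.1, by omega⟩) := by
      simp [List.get_eq_getElem, List.getElem_map]
    rw [h1, h2, ← hAdj]
    exact hadj

lemma chi_equiv [Fintype V] [Fintype W] (hAdj : ∀ a b, G1.Adj a b ↔ G2.Adj (e a) (e b)) :
    chi G1 = chi G2 := by
  have hiff : ∀ n, G1.Colorable n ↔ G2.Colorable n := by
    intro n
    constructor
    · rintro ⟨C⟩
      exact ⟨SimpleGraph.Coloring.mk (fun w => C (e.symm w))
        (fun {a b} hab => C.valid ((hAdj _ _).mpr (by simpa using hab)))⟩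
    · rintro ⟨C⟩
      exact ⟨SimpleGraph.Coloring.mk (fun v => C (e v))
        (fun {a b} hab => C.valid ((hAdj _ _).mp hab))⟩
  unfold chi
  congr 1
  ext n
  exact hiff n

end Transfer

lemma chi_colorable [Fintype V] (G : SimpleGraph V) : G.Colorable (chi G) := by
  have hne : {n : ℕ | G.Colorable n}.Nonempty :=
    ⟨Fintype.card V, G.colorable_of_fintype⟩
  exact Nat.sInf_mem hne

lemma chi_induce_le [Fintype V] (G : SimpleGraph V) (s : Set V) [Fintype ↥s] :
    chi (G.induce s) ≤ chi G := by
  obtain ⟨C⟩ := chi_colorable G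
  refine Nat.sInf_le ⟨SimpleGraph.Coloring.mk (fun v => C v.1) (fun {a b} hab => C.valid hab)⟩

lemma good_self {W : Type*} [Fintype W] [Nonempty W] (H : SimpleGraph W) (hg : Good H)
    (L : List W) (hord : IsConnOrder H L) : ∀ x, greedy H L x ≤ chi H := by
  intro x
  set t : Finset W := Finset.univ with ht
  let e : W ≃ ↥(↑t : Set W) :=
    { toFun := fun w => ⟨w, by simp [ht]⟩
      invFun := Subtype.val
      left_inv := fun w => rfl
      right_inv := fun x => Subtype.ext rfl }
  have hAdj : ∀ a b, H.Adj a b ↔ (H.induce (↑t : Set W)).Adj (e a) (e b) := fun a b => Iff.rfl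
  have hord2 : IsConnOrder (H.induce (↑t : Set W)) (L.map e) :=
    connOrder_equiv e H _ hAdj L hord
  have hconn2 : (H.induce (↑t : Set W)).Connected :=
    connected_of_connOrder _ _ hord2 ⟨e (Classical.arbitrary W)⟩
  have hgo := hg t hconn2 (L.map e) hord2
  have hle := hgo (e x)
  rw [← greedy_equiv e H _ hAdj L x] at hle
  rwa [chi_equiv e H _ hAdj]

lemma connOrder_erase (G : SimpleGraph V) (A B : List V) (u : V)
    (hl : IsConnOrder G (A ++ u :: B)) (hB : ∀ b ∈ B, ¬ G.Adj u b) :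
    (A ++ B).Nodup ∧ (∀ v, v ∈ A ++ u :: B → v ≠ u → v ∈ A ++ B) ∧
      ∀ i : Fin (A ++ B).length, 0 < i.1 →
        ∃ j : Fin (A ++ B).length, j.1 < i.1 ∧ G.Adj ((A ++ B).get j) ((A ++ B).get i) := by
  obtain ⟨hnd, hmem, hconn⟩ := hl
  have hlen : (A ++ u :: B).length = A.length + B.length + 1 := by simp; omega
  have hlen2 : (A ++ B).length = A.length + B.length := by simp
  have hgetA : ∀ (i : ℕ) (h : i < A.length),
      (A ++ B)[i]'(by omega) = (A ++ u :: B)[i]'(by omega) := by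
    intro i h
    rw [List.getElem_append_left h, List.getElem_append_left h]
  have hgetB : ∀ (t : ℕ) (h2 : t < B.length),
      (A ++ B)[A.length + t]'(by omega) = (A ++ u :: B)[A.length + (t + 1)]'(by omega) := by
    intro t h2
    rw [List.getElem_append_right (by omega), List.getElem_append_right (by omega)]
    have e1 : A.length + t - A.length = t := by omega
    have e2 : A.length + (t + 1) - A.length = t + 1 := by omega
    simp_rw [e1, e2]
    rw [List.getElem_cons_succ]
  have hgetu : (A ++ u :: B)[A.length]'(by omega) = u := by
    rw [List.getElem_append_right (le_refl _)]
    simp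
  refine ⟨?_, ?_, ?_⟩
  · have hsub : (A ++ B).Sublist (A ++ u :: B) :=
      List.Sublist.append_left (List.sublist_cons_self _ _) A
    exact hsub.nodup hnd
  · intro v hv hvu
    rw [List.mem_append] at hv ⊢
    rcases hv with h | h
    · exact Or.inl h
    · rcases List.mem_cons.mp h with rfl | h
      · exact absurd rfl hvu
      · exact Or.inr h
  · rintro ⟨iv, hi⟩ hpos
    have hpos' : 0 < iv := hpos
    have hi' : iv < A.length + B.length := by omega
    by_cases hiA : iv < A.length
    · obtain ⟨⟨jv, hjl⟩, hji, hadj⟩ := hconn ⟨iv, by omega⟩ hpos'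
      have hji' : jv < iv := hji
      refine ⟨⟨jv, by omega⟩, hji', ?_⟩
      simp only [List.get_eq_getElem] at hadj ⊢
      rw [hgetA iv hiA, hgetA jv (by omega)]
      exact hadj
    · push_neg at hiA
      obtain ⟨t, rfl⟩ : ∃ t, iv = A.length + t := ⟨iv - A.length, by omega⟩
      have htB : t < B.length := by omega
      obtain ⟨⟨jv, hjl⟩, hji, hadj⟩ := hconn ⟨A.length + (t + 1), by omega⟩ ((by omega : 0 < A.length + (t + 1)) : _)
      have hji' : jv < A.length + (t + 1) := hji
      have hjl' : jv < A.length + B.length + 1 := by omega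
      simp only [List.get_eq_getElem] at hadj
      rcases lt_trichotomy jv A.length with hj | hj | hj
      · refine ⟨⟨jv, by omega⟩, show jv < A.length + t by omega, ?_⟩
        simp only [List.get_eq_getElem]
        rw [hgetB t htB, hgetA jv hj]
        exact hadj
      · exfalso
        subst hj
        rw [hgetu] at hadj
        have hmemB : (A ++ u :: B)[A.length + (t + 1)]'(by omega) ∈ B := by
          rw [List.getElem_append_right (by omega)]
          have e1 : A.length + (t + 1) - A.length = t + 1 := by omega
          simp_rw [e1]
          rw [List.getElem_cons_succ]
          exact List.getElem_mem _
        exact hB _ hmemB hadj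
      · obtain ⟨r, rfl⟩ : ∃ r, jv = A.length + (r + 1) := ⟨jv - A.length - 1, by omega⟩
        have hrB : r < B.length := by omega
        refine ⟨⟨A.length + r, by omega⟩, show A.length + r < A.length + t by omega, ?_⟩
        simp only [List.get_eq_getElem]
        rw [hgetB t htB, hgetB r hrB]
        exact hadj

lemma connOrder_pmap (G : SimpleGraph V) (s : Set V) (m : List V) (hms : ∀ v ∈ m, v ∈ s)
    (hnd : m.Nodup) (hcompl : ∀ v, v ∈ s → v ∈ m)
    (hconn : ∀ i : Fin m.length, 0 < i.1 →
      ∃ j : Fin m.length, j.1 < i.1 ∧ G.Adj (m.get j) (m.get i)) :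
    IsConnOrder (G.induce s) (m.pmap (fun v h => (⟨v, h⟩ : ↥s)) hms) := by
  refine ⟨?_, ?_, ?_⟩
  · exact hnd.pmap (fun a ha b hb h => congrArg Subtype.val h)
  · intro v
    rw [List.mem_pmap]
    exact ⟨v.1, hcompl v.1 v.2, Subtype.ext rfl⟩
  · intro i hi
    have hlen : (m.pmap (fun v h => (⟨v, h⟩ : ↥s)) hms).length = m.length := List.length_pmap
    obtain ⟨j, hj, hadj⟩ := hconn ⟨i.1, by omega⟩ hi
    refine ⟨⟨j.1, by omega⟩, hj, ?_⟩
    simp only [List.get_eq_getElem] at hadj ⊢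
    rw [List.getElem_pmap, List.getElem_pmap]
    exact hadj

lemma deg2_le_two [Fintype V] (G : SimpleGraph V) (l : List V)
    (hmin : MinimallyBad G) (hbad : BadOrder G l) (u : V)
    (hdeg : (G.neighborSet u).ncard = 2) : greedy G l u ≤ 2 := by
  classical
  by_contra hgt
  push_neg at hgt
  obtain ⟨horder, hnotgood⟩ := hbad
  obtain ⟨hnd, hmem, hconn⟩ := horder
  obtain ⟨⟨k, hk⟩, hgetu⟩ := List.mem_iff_get.mp (hmem u)
  have hval : greedy G l u = sInf (avail G (greedyFrom G (fun _ => 0) (l.take k)) u) := by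
    conv_lhs => rw [← hgetu]
    rw [greedy_get G l hnd k hk, hgetu]
  set F := greedyFrom G (fun _ => 0) (l.take k) with hF
  have h3 : greedy G l u = 3 := by
    have hb := avail_le_deg G F u
    rw [← hval] at hb
    rw [hdeg] at hb
    omega
  obtain ⟨⟨w1, hw1a, hw1v⟩, ⟨w2, hw2a, hw2v⟩⟩ :=
    eq_three_struct G F u (by rw [← hval]; exact h3)
  have hw1m : w1 ∈ l.take k := by
    by_contra h
    rw [hF, greedyFrom_of_not_mem _ _ _ _ h] at hw1v
    simp at hw1v
  have hw2m : w2 ∈ l.take k := by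
    by_contra h
    rw [hF, greedyFrom_of_not_mem _ _ _ _ h] at hw2v
    simp at hw2v
  have hw12 : w1 ≠ w2 := by
    rintro rfl
    rw [hw1v] at hw2v
    omega
  have hnset : G.neighborSet u = {w1, w2} := by
    symm
    apply Set.eq_of_subset_of_ncard_le
    · intro x hx
      rcases Set.mem_insert_iff.mp hx with rfl | hx
      · exact hw1a
      · rw [Set.mem_singleton_iff] at hx
        subst hx
        exact hw2a
    · rw [hdeg, Set.ncard_pair hw12]
    · exact Set.toFinite _
  have hnbrtake : ∀ w, G.Adj u w → w ∈ l.take k := by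
    intro w hw
    have hws : w ∈ G.neighborSet u := hw
    rw [hnset] at hws
    rcases Set.mem_insert_iff.mp hws with rfl | hws
    · exact hw1m
    · rw [Set.mem_singleton_iff] at hws
      subst hws
      exact hw2m
  have hdecomp : l = l.take k ++ u :: l.drop (k + 1) := by
    conv_lhs => rw [← List.take_append_drop k l]
    rw [List.drop_eq_getElem_cons hk]
    simp only [List.get_eq_getElem] at hgetu
    rw [hgetu]
  set A := l.take k with hA
  set B := l.drop (k + 1) with hBdef
  have hnd2 : (A ++ u :: B).Nodup := hdecomp ▸ hnd
  have hnd2' := hnd2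
  rw [List.nodup_append] at hnd2'
  have hBnadj : ∀ b ∈ B, ¬ G.Adj u b := by
    intro b hb hadj
    exact hnd2'.2.2 _ (hnbrtake b hadj) _ (List.mem_cons_of_mem _ hb) rfl
  set s : Finset V := Finset.univ.erase u with hs
  have hsne : s ≠ Finset.univ := by
    intro h
    have : u ∈ s := h ▸ Finset.mem_univ u
    simp [hs] at this
  have hmemS : ∀ v : V, v ≠ u → v ∈ (↑s : Set V) := by
    intro v hv; simp [hs, hv]
  have hmemS' : ∀ v : V, v ∈ (↑s : Set V) → v ≠ u := by
    intro v hv; simp [hs] at hv; exact hv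
  set m := A ++ B with hm
  have hmu : ∀ v ∈ m, v ∈ (↑s : Set V) := by
    intro v hv
    apply hmemS
    rintro rfl
    rw [hm, List.mem_append] at hv
    rcases hv with h | h
    · exact hnd2'.2.2 _ h _ List.mem_cons_self rfl
    · exact (List.nodup_cons.mp hnd2'.2.1).1 h
  have horder' : IsConnOrder G (A ++ u :: B) := hdecomp ▸ (⟨hnd, hmem, hconn⟩ : IsConnOrder G l)
  obtain ⟨hmnd, hmcompl, hmconn⟩ := connOrder_erase G A B u horder' hBnadj
  set L := m.pmap (fun v h => (⟨v, h⟩ : ↥(↑s : Set V))) hmu with hL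
  have hordL : IsConnOrder (G.induce (↑s : Set V)) L :=
    connOrder_pmap G _ m hmu hmnd
      (fun v hv => hmcompl v (hdecomp ▸ hmem v) (hmemS' v hv)) hmconn
  haveI : Nonempty ↥(↑s : Set V) := ⟨⟨w1, hmemS w1 (fun h => (G.ne_of_adj hw1a) h.symm)⟩⟩
  have hconnH : (G.induce (↑s : Set V)).Connected :=
    connected_of_connOrder _ L hordL inferInstance
  have hGood : Good (G.induce (↑s : Set V)) := hmin.2 s hsne hconnH
  have hbound := good_self (G.induce (↑s : Set V)) hGood L hordL
  have hchain : ∀ v : V, v ≠ u → greedy G l v ≤ chi G := by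
    intro v hv
    have h1 : greedy G l v = greedy G m v := by
      conv_lhs => rw [hdecomp]
      exact greedy_erase G A B u hBnadj v hv
    have h2 : greedy (G.induce (↑s : Set V)) L ⟨v, hmemS v hv⟩ = greedy G m v :=
      greedy_induce G _ m hmu v _
    have hb := hbound ⟨v, hmemS v hv⟩
    have h4 : chi (G.induce (↑s : Set V)) ≤ chi G := chi_induce_le G _
    omega
  rw [GoodOrder] at hnotgood
  push_neg at hnotgood
  obtain ⟨v, hvbad⟩ := hnotgood
  have hvu : v = u := by
    by_contra h
    exact absurd (hchain v h) (not_le.mpr hvbad)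
  rw [hvu] at hvbad
  have hchi2 : chi G ≤ 2 := by omega
  have hcol2 : G.Colorable 2 := (chi_colorable G).mono hchi2
  obtain ⟨C⟩ := hcol2
  have h0 : 0 < l.length := by omega
  have h2col := two_col_greedy G l ⟨hnd, hmem, hconn⟩ C h0 k hk
  rw [hgetu] at h2col
  by_cases hcc : C u = C (l.get ⟨0, h0⟩)
  · rw [if_pos hcc] at h2col
    omega
  · rw [if_neg hcc] at h2col
    omega

end Aux


theorem stmt11 {V : Type*} [Fintype V] (G : SimpleGraph V) (l : List V)
    (hmin : MinimallyBad G) (hbad : BadOrder G l)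
    (P : List V) (hP : IsFlatPath G P) :
    (∀ i (h : i < P.length), 0 < i → i + 1 < P.length →
      (greedy G l (P.get ⟨i, h⟩) = 1 ∨ greedy G l (P.get ⟨i, h⟩) = 2)) ∧
    (∀ i (h : i + 1 < P.length), 0 < i → i + 2 < P.length →
      greedy G l (P.get ⟨i, by omega⟩) ≠ greedy G l (P.get ⟨i + 1, h⟩)) := by
  obtain ⟨⟨hPnd, hPadj⟩, hPflat⟩ := hP
  have hnd := hbad.1.1
  have hmem := hbad.1.2.1
  constructor
  · intro i h h0 h1
    have hdeg := hPflat ⟨i, h⟩ h0 h1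
    have hle := Aux.deg2_le_two G l hmin hbad _ hdeg
    have hge := Aux.greedy_pos G l hnd _ (hmem (P.get ⟨i, h⟩))
    omega
  · intro i h h0 h1
    have hadj : G.Adj (P.get ⟨i, by omega⟩) (P.get ⟨i + 1, h⟩) :=
      (hPadj ⟨i, by omega⟩ ⟨i + 1, h⟩).mpr (Or.inl rfl)
    exact Aux.greedy_proper G l hnd (hmem _) (hmem _) hadj
end
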